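/- Let Φ be a root system with Weyl group W, and let x, y be in the open positive Weyl chamber. For any w ∈ W with w ≠ id, |x - w·y|² ≥ max{ min_{α ∈ Φ_+} d(x, H_α)², min_{α ∈ Φ_+} d(y, H_α)² }, where d(·, H_α) is the distance to the hyperplane perpendicular to α. -/

import Mathlib

local notation "⟪" x ", " y "⟫" => @inner ℝ _ _ x y

private lemma aux_dist {d : ℕ} (a x v : EuclideanSpace ℝ (Fin d))
    (hax : 0 < ⟪a, x⟫) (hav : ⟪a, v⟫ ≤ 0) :
    Metric.infDist x {z : EuclideanSpace ℝ (Fin d) | ⟪a, z⟫ = 0} ≤ ‖x - v‖ := by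
  have ha : a ≠ 0 := by rintro rfl; simp [inner_zero_left] at hax
  have hna : 0 < ‖a‖ := norm_pos_iff.mpr ha
  set c : ℝ := ⟪a, x⟫ / ‖a‖ ^ 2 with hc
  have hmem : (x - c • a) ∈ {z : EuclideanSpace ℝ (Fin d) | ⟪a, z⟫ = 0} := by
    simp only [Set.mem_setOf_eq, inner_sub_right, real_inner_smul_right,
      real_inner_self_eq_norm_sq, hc]
    field_simp
    ring
  calc Metric.infDist x {z : EuclideanSpace ℝ (Fin d) | ⟪a, z⟫ = 0}
      ≤ dist x (x - c • a) := Metric.infDist_le_dist_of_mem hmem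
    _ = ‖c • a‖ := by rw [dist_eq_norm, sub_sub_cancel]
    _ = ⟪a, x⟫ / ‖a‖ := by
        rw [norm_smul, Real.norm_eq_abs, hc,
          abs_of_pos (div_pos hax (by positivity))]
        field_simp
    _ ≤ ⟪a, x - v⟫ / ‖a‖ := by
        have h1 : ⟪a, x⟫ ≤ ⟪a, x - v⟫ := by rw [inner_sub_right]; linarith
        gcongr
    _ ≤ ‖x - v‖ := by
        rw [div_le_iff₀ hna, inner_sub_right]
        calc ⟪a, x⟫ - ⟪a, v⟫ ≤ ⟪a, x - v⟫ := by rw [inner_sub_right]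
          _ ≤ ‖a‖ * ‖x - v‖ := real_inner_le_norm a (x - v)
          _ = ‖x - v‖ * ‖a‖ := mul_comm _ _

/-- For a root system `Φ` with positive roots `Φp`, Weyl group `W` and `x, y`
in the open positive Weyl chamber, for any `w ∈ W` with `w ≠ id`,
`|x - w·y|² ≥ max{ min_{α ∈ Φ_+} d(x, H_α)², min_{α ∈ Φ_+} d(y, H_α)² }`.
The fact that nontrivial elements of `W` move the open chamber off itself is supplied. -/
theorem stmt_8 {d : ℕ}
    (Φp : Finset (EuclideanSpace ℝ (Fin d))) (hΦ : Φp.Nonempty)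
    (h0 : (0 : EuclideanSpace ℝ (Fin d)) ∉ Φp)
    (W : Subgroup (EuclideanSpace ℝ (Fin d) ≃ₗᵢ[ℝ] EuclideanSpace ℝ (Fin d)))
    (hchamber : ∀ w ∈ W, w ≠ 1 →
      ∀ z : EuclideanSpace ℝ (Fin d), (∀ a ∈ Φp, 0 < ⟪a, z⟫) →
        ¬ (∀ a ∈ Φp, 0 < ⟪a, w z⟫))
    (x y : EuclideanSpace ℝ (Fin d))
    (hx : ∀ a ∈ Φp, 0 < ⟪a, x⟫) (hy : ∀ a ∈ Φp, 0 < ⟪a, y⟫)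
    (w : EuclideanSpace ℝ (Fin d) ≃ₗᵢ[ℝ] EuclideanSpace ℝ (Fin d))
    (hw : w ∈ W) (hw1 : w ≠ 1) :
    max (Φp.inf' hΦ fun a =>
          (Metric.infDist x {z : EuclideanSpace ℝ (Fin d) | ⟪a, z⟫ = 0}) ^ 2)
        (Φp.inf' hΦ fun a =>
          (Metric.infDist y {z : EuclideanSpace ℝ (Fin d) | ⟪a, z⟫ = 0}) ^ 2)
      ≤ ‖x - w y‖ ^ 2 := by
  apply max_le
  · -- bound via x: w y is not in the chamber
    have := hchamber w hw hw1 y hy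
    push_neg at this
    obtain ⟨a, ha, hay⟩ := this
    have h1 : Metric.infDist x {z : EuclideanSpace ℝ (Fin d) | ⟪a, z⟫ = 0} ≤ ‖x - w y‖ :=
      aux_dist a x (w y) (hx a ha) hay
    refine le_trans (Finset.inf'_le _ ha) ?_
    exact pow_le_pow_left₀ Metric.infDist_nonneg h1 2
  · -- bound via y: w⁻¹ x is not in the chamber
    have hw1' : w⁻¹ ≠ 1 := fun h => hw1 (by simpa using congrArg (·⁻¹) h)
    have := hchamber w⁻¹ (inv_mem hw) hw1' x hx
    push_neg at this
    obtain ⟨a, ha, hax⟩ := this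
    have h1 : Metric.infDist y {z : EuclideanSpace ℝ (Fin d) | ⟪a, z⟫ = 0} ≤ ‖y - w⁻¹ x‖ :=
      aux_dist a y (w⁻¹ x) (hy a ha) hax
    have h2 : ‖y - w⁻¹ x‖ = ‖x - w y‖ := by
      rw [← w.norm_map (y - w⁻¹ x)]
      simp only [map_sub]
      rw [norm_sub_rev]
      congr 1
      simp
    rw [h2] at h1
    refine le_trans (Finset.inf'_le _ ha) ?_
    exact pow_le_pow_left₀ Metric.infDist_nonneg h1 2
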